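/- arXiv:1505.07633 — 4 statements merged into one kernel-verified Lean document; each statement's English description precedes it below -/
import Mathlib

section
/- Let K be a field with a nontrivial Krull valuation v into a linearly ordered abelian group Γ, and let A(x) = Σ_{i=0}^n a_i x^i ∈ K[x] be a polynomial of degree n that is an Eisenstein–Dumas polynomial at v. Then A(x) is irreducible in K[x]. -/
open Polynomial

/-- A Krull valuation on a field `K` with values in `Γ ∪ {∞}` (here `WithTop Γ`), where `Γ` is a
linearly ordered abelian group: `v a = ∞ ↔ a = 0`, `v (a*b) = v a + v b`, and
`v (a+b) ≥ min (v a) (v b)`. -/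
structure KrullValuation (K : Type*) [Field K] (Γ : Type*) [AddCommGroup Γ] [LinearOrder Γ] [IsOrderedAddMonoid Γ] where
  v : K → WithTop Γ
  eq_top_iff : ∀ a : K, v a = ⊤ ↔ a = 0
  map_mul : ∀ a b : K, v (a * b) = v a + v b
  min_le_add : ∀ a b : K, min (v a) (v b) ≤ v (a + b)

variable {K : Type*} [Field K] {Γ : Type*} [AddCommGroup Γ] [LinearOrder Γ] [IsOrderedAddMonoid Γ]

namespace KrullValuation
variable (w : KrullValuation K Γ)

theorem v_zero : w.v 0 = ⊤ := (w.eq_top_iff 0).2 rfl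

theorem v_ne_top {a : K} (h : a ≠ 0) : w.v a ≠ ⊤ := fun ht => h ((w.eq_top_iff a).1 ht)

theorem v_one : w.v 1 = 0 := by
  have h := w.map_mul 1 1
  rw [one_mul] at h
  have h1 : w.v 1 ≠ ⊤ := w.v_ne_top one_ne_zero
  lift w.v 1 to Γ using h1 with x hx
  have hx' : x = x + x := by exact_mod_cast h
  exact_mod_cast left_eq_add.mp hx'

theorem v_neg (a : K) : w.v (-a) = w.v a := by
  have hm1 : w.v (-1 : K) = 0 := by
    have h := w.map_mul (-1) (-1)
    rw [neg_one_mul, neg_neg, w.v_one] at h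
    have h1 : w.v (-1 : K) ≠ ⊤ := w.v_ne_top (by norm_num)
    lift w.v (-1 : K) to Γ using h1 with x hx
    have hx' : x + x = (0 : Γ) := by exact_mod_cast h.symm
    have hx0 : x = 0 := by
      rcases lt_trichotomy x 0 with h' | h' | h'
      · exact absurd hx' (ne_of_lt (add_neg h' h'))
      · exact h'
      · exact absurd hx' (ne_of_gt (add_pos h' h'))
    exact_mod_cast hx0
  rw [show -a = -1 * a by ring, w.map_mul, hm1, zero_add]

theorem v_add_eq_left {a b : K} (h : w.v a < w.v b) : w.v (a + b) = w.v a := by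
  refine le_antisymm ?_ ?_
  · have h2 := w.min_le_add (a + b) (-b)
    rw [add_neg_cancel_right, w.v_neg] at h2
    rcases le_total (w.v (a + b)) (w.v b) with hle | hle
    · rwa [min_eq_left hle] at h2
    · rw [min_eq_right hle] at h2; exact absurd (lt_of_lt_of_le h h2) (lt_irrefl _)
  · have := w.min_le_add a b
    rwa [min_eq_left h.le] at this

theorem le_v_sum {ι : Type*} (s : Finset ι) (f : ι → K) (t : WithTop Γ)
    (h : ∀ p ∈ s, t ≤ w.v (f p)) : t ≤ w.v (∑ p ∈ s, f p) := by
  induction s using Finset.cons_induction with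
  | empty => simp [w.v_zero]
  | cons a s ha ih =>
    rw [Finset.sum_cons]
    refine le_trans ?_ (w.min_le_add _ _)
    exact le_min (h a (Finset.mem_cons_self a s)) (ih fun p hp => h p (Finset.mem_cons_of_mem hp))

theorem lt_v_sum {ι : Type*} (s : Finset ι) (f : ι → K) (t : WithTop Γ) (ht : t ≠ ⊤)
    (h : ∀ p ∈ s, t < w.v (f p)) : t < w.v (∑ p ∈ s, f p) := by
  induction s using Finset.cons_induction with
  | empty => simpa [w.v_zero] using lt_top_iff_ne_top.mpr ht
  | cons a s ha ih =>
    rw [Finset.sum_cons]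
    refine lt_of_lt_of_le ?_ (w.min_le_add _ _)
    exact lt_min (h a (Finset.mem_cons_self a s)) (ih fun p hp => h p (Finset.mem_cons_of_mem hp))

theorem v_sum_eq {ι : Type*} [DecidableEq ι] (s : Finset ι) (f : ι → K) (p0 : ι) (hp0 : p0 ∈ s)
    (htop : w.v (f p0) ≠ ⊤) (h : ∀ p ∈ s, p ≠ p0 → w.v (f p0) < w.v (f p)) :
    w.v (∑ p ∈ s, f p) = w.v (f p0) := by
  rw [← Finset.add_sum_erase s f hp0]
  exact w.v_add_eq_left (w.lt_v_sum _ _ _ htop fun p hp =>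
    h p (Finset.mem_of_mem_erase hp) (Finset.ne_of_mem_erase hp))

end KrullValuation

theorem wt_nsmul_top {n : ℕ} (hn : n ≠ 0) : n • (⊤ : WithTop Γ) = ⊤ := by
  obtain ⟨m, rfl⟩ := Nat.exists_eq_succ_of_ne_zero hn
  rw [succ_nsmul, add_top]

theorem wt_lt_of_nsmul_lt {n : ℕ} {a b : WithTop Γ} (h : n • a < n • b) : a < b := by
  by_contra hba
  push_neg at hba
  exact absurd (nsmul_le_nsmul_right hba n) (not_le.mpr h)

theorem wt_split {a a' b b' : WithTop Γ} (ha : a ≤ a') (hb : b ≤ b')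
    (h : a' + b' ≤ a + b) (ha' : a' ≠ ⊤) (hb' : b' ≠ ⊤) : a = a' ∧ b = b' := by
  have h1 : a' + b = a' + b' :=
    le_antisymm (add_le_add_right hb a') (le_trans h (add_le_add_left ha b))
  have hbb : b = b' := WithTop.add_left_cancel ha' h1
  subst hbb
  have hb_ne : b ≠ ⊤ := hb'
  have h2 : a + b = a' + b := le_antisymm (add_le_add_left ha b) h
  exact ⟨WithTop.add_right_cancel hb_ne h2, rfl⟩


/-- The valuation `w` is nontrivial. -/
def KrullValuation.IsNontrivial (w : KrullValuation K Γ) : Prop :=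
  ∃ a : K, a ≠ 0 ∧ w.v a ≠ 0

/-- `A` is an Eisenstein–Dumas polynomial of degree `n` at the valuation `w`:
(D0) `a₀ * aₙ ≠ 0`, (D1) `v(a₀) − v(aₙ) ∉ kΓ` for every integer `k > 1` dividing `n`
(stated as: `v(a₀) ≠ v(aₙ) + k•g` for all `g ∈ Γ`),
(D2) `n·v(aᵢ) ≥ (n−i)·v(a₀) + i·v(aₙ)` for `0 ≤ i ≤ n`. -/
def IsEisensteinDumas (w : KrullValuation K Γ) (n : ℕ) (A : K[X]) : Prop :=
  A.natDegree = n ∧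
  A.coeff 0 * A.coeff n ≠ 0 ∧
  (∀ k : ℕ, 1 < k → k ∣ n → ∀ g : Γ,
    w.v (A.coeff 0) ≠ w.v (A.coeff n) + ((k • g : Γ) : WithTop Γ)) ∧
  (∀ i ≤ n, (n - i) • w.v (A.coeff 0) + i • w.v (A.coeff n) ≤ n • w.v (A.coeff i))

/-- Eisenstein–Dumas criterion: an Eisenstein–Dumas polynomial of degree `n` at a nontrivial
Krull valuation is irreducible in `K[x]`. -/
theorem eisensteinDumas_irreducible (w : KrullValuation K Γ) (hw : w.IsNontrivial)
    (n : ℕ) (A : K[X]) (hA : IsEisensteinDumas w n A) :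
    Irreducible A := by
  classical
  obtain ⟨hdeg, hD0, hD1, hD2⟩ := hA
  have ha0 : A.coeff 0 ≠ 0 := left_ne_zero_of_mul hD0
  have han : A.coeff n ≠ 0 := right_ne_zero_of_mul hD0
  have hn0 : n ≠ 0 := by
    intro h
    subst h
    exact hD1 2 one_lt_two (dvd_zero 2) 0 (by simp)
  constructor
  · intro hu
    exact hn0 (hdeg ▸ Polynomial.natDegree_eq_zero_of_isUnit hu)
  · intro B C hBC
    by_contra hcon
    push_neg at hcon
    obtain ⟨hBu, hCu⟩ := hcon
    have hAne : A ≠ 0 := fun h => ha0 (by simp [h])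
    have hBne : B ≠ 0 := fun h => hAne (by simp [hBC, h])
    have hCne : C ≠ 0 := fun h => hAne (by simp [hBC, h])
    set r := B.natDegree with hrdef
    set s := C.natDegree with hsdef
    have hr : r ≠ 0 := by
      intro h
      have hBC0 := Polynomial.eq_C_of_natDegree_eq_zero h
      exact hBu (hBC0 ▸ Polynomial.isUnit_C.mpr (isUnit_iff_ne_zero.mpr
        (fun h0 => hBne (by rw [hBC0, h0, map_zero]))))
    have hs : s ≠ 0 := by
      intro h
      have hBC0 := Polynomial.eq_C_of_natDegree_eq_zero h
      exact hCu (hBC0 ▸ Polynomial.isUnit_C.mpr (isUnit_iff_ne_zero.mpr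
        (fun h0 => hCne (by rw [hBC0, h0, map_zero]))))
    have hrs : r + s = n := by rw [hrdef, hsdef, ← Polynomial.natDegree_mul hBne hCne, ← hBC, hdeg]
    -- coefficients
    have hb0c0 : B.coeff 0 * C.coeff 0 = A.coeff 0 := by rw [hBC, Polynomial.mul_coeff_zero]
    have hbrcs : B.coeff r * C.coeff s = A.coeff n := by
      have h := Polynomial.coeff_mul_degree_add_degree B C
      rw [hBC, ← hrs]
      exact h.symm
    have hb0 : B.coeff 0 ≠ 0 := fun h => ha0 (by rw [← hb0c0, h, zero_mul])
    have hc0 : C.coeff 0 ≠ 0 := fun h => ha0 (by rw [← hb0c0, h, mul_zero])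
    have hbr : B.coeff r ≠ 0 := Polynomial.leadingCoeff_ne_zero.mpr hBne
    have hcs : C.coeff s ≠ 0 := Polynomial.leadingCoeff_ne_zero.mpr hCne
    -- values in Γ
    obtain ⟨α0, hα0⟩ := WithTop.ne_top_iff_exists.mp (w.v_ne_top ha0)
    obtain ⟨αn, hαn⟩ := WithTop.ne_top_iff_exists.mp (w.v_ne_top han)
    obtain ⟨β0, hβ0⟩ := WithTop.ne_top_iff_exists.mp (w.v_ne_top hb0)
    obtain ⟨βr, hβr⟩ := WithTop.ne_top_iff_exists.mp (w.v_ne_top hbr)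
    obtain ⟨c0v, hc0v⟩ := WithTop.ne_top_iff_exists.mp (w.v_ne_top hc0)
    obtain ⟨csv, hcsv⟩ := WithTop.ne_top_iff_exists.mp (w.v_ne_top hcs)
    set δ : Γ := α0 - αn with hδdef
    set P : ℕ → WithTop Γ := fun i => n • w.v (B.coeff i) + ((i • δ : Γ) : WithTop Γ) with hPdef
    set Q : ℕ → WithTop Γ := fun j => n • w.v (C.coeff j) + ((j • δ : Γ) : WithTop Γ) with hQdef
    set VB := (Finset.range (r+1)).inf' Finset.nonempty_range_add_one P with hVBdef
    set VC := (Finset.range (s+1)).inf' Finset.nonempty_range_add_one Q with hVCdef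
    have hVBle : ∀ i ≤ r, VB ≤ P i := fun i hi =>
      Finset.inf'_le P (Finset.mem_range.mpr (Nat.lt_succ_of_le hi))
    have hVCle : ∀ j ≤ s, VC ≤ Q j := fun j hj =>
      Finset.inf'_le Q (Finset.mem_range.mpr (Nat.lt_succ_of_le hj))
    have hexB : ∃ i, P i = VB := by
      obtain ⟨i, _, h⟩ := Finset.exists_mem_eq_inf' Finset.nonempty_range_add_one P
      exact ⟨i, h.symm⟩
    have hexC : ∃ j, Q j = VC := by
      obtain ⟨j, _, h⟩ := Finset.exists_mem_eq_inf' Finset.nonempty_range_add_one Q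
      exact ⟨j, h.symm⟩
    set i0 := Nat.find hexB with hi0def
    set j0 := Nat.find hexC with hj0def
    have hPi0 : P i0 = VB := Nat.find_spec hexB
    have hQj0 : Q j0 = VC := Nat.find_spec hexC
    have hi0le : i0 ≤ r := by
      obtain ⟨i, hi, h⟩ := Finset.exists_mem_eq_inf' (Finset.nonempty_range_add_one (n := r)) P
      exact le_trans (Nat.find_min' hexB h.symm) (Nat.lt_succ_iff.mp (Finset.mem_range.mp hi))
    have hj0le : j0 ≤ s := by
      obtain ⟨j, hj, h⟩ := Finset.exists_mem_eq_inf' (Finset.nonempty_range_add_one (n := s)) Q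
      exact le_trans (Nat.find_min' hexC h.symm) (Nat.lt_succ_iff.mp (Finset.mem_range.mp hj))
    have hi0min : ∀ i < i0, P i ≠ VB := fun i hi => Nat.find_min hexB hi
    have hj0min : ∀ j < j0, Q j ≠ VC := fun j hj => Nat.find_min hexC hj
    -- finiteness
    have hP0 : P 0 = ((n • β0 : Γ) : WithTop Γ) := by
      simp only [hPdef]
      rw [← hβ0, zero_nsmul, WithTop.coe_zero, add_zero, ← WithTop.coe_nsmul]
    have hQ0 : Q 0 = ((n • c0v : Γ) : WithTop Γ) := by
      simp only [hQdef]
      rw [← hc0v, zero_nsmul, WithTop.coe_zero, add_zero, ← WithTop.coe_nsmul]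
    have hVBne : VB ≠ ⊤ := ne_top_of_le_ne_top WithTop.coe_ne_top (hP0 ▸ hVBle 0 (Nat.zero_le r))
    have hVCne : VC ≠ ⊤ := ne_top_of_le_ne_top WithTop.coe_ne_top (hQ0 ▸ hVCle 0 (Nat.zero_le s))
    have hbi0 : w.v (B.coeff i0) ≠ ⊤ := by
      intro h
      apply hVBne
      rw [← hPi0]
      simp only [hPdef]
      rw [h, wt_nsmul_top hn0, top_add]
    have hcj0 : w.v (C.coeff j0) ≠ ⊤ := by
      intro h
      apply hVCne
      rw [← hQj0]
      simp only [hQdef]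
      rw [h, wt_nsmul_top hn0, top_add]
    -- rearrangement
    have hPQ : ∀ i j : ℕ, P i + Q j
        = n • w.v (B.coeff i * C.coeff j) + (((i + j) • δ : Γ) : WithTop Γ) := by
      intro i j
      simp only [hPdef, hQdef]
      rw [w.map_mul, smul_add, add_nsmul, WithTop.coe_add]
      abel
    set m := i0 + j0 with hmdef
    have hmn : m ≤ n := by omega
    -- sum equality (Gauss/Newton step)
    have hsum : w.v (A.coeff m) = w.v (B.coeff i0 * C.coeff j0) := by
      rw [hBC, Polynomial.coeff_mul]
      refine w.v_sum_eq _ _ (i0, j0) (Finset.HasAntidiagonal.mem_antidiagonal.mpr rfl) ?_ ?_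
      · rw [w.map_mul]; exact WithTop.add_ne_top.mpr ⟨hbi0, hcj0⟩
      · intro p hp hne
        have hpm : p.1 + p.2 = m := Finset.HasAntidiagonal.mem_antidiagonal.mp hp
        have hfin : w.v (B.coeff i0 * C.coeff j0) ≠ ⊤ := by
          rw [w.map_mul]; exact WithTop.add_ne_top.mpr ⟨hbi0, hcj0⟩
        by_cases h1 : r < p.1
        · have h0 : B.coeff p.1 = 0 := Polynomial.coeff_eq_zero_of_natDegree_lt h1
          rw [h0, zero_mul, w.v_zero]
          exact lt_top_iff_ne_top.mpr hfin
        by_cases h2 : s < p.2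
        · have h0 : C.coeff p.2 = 0 := Polynomial.coeff_eq_zero_of_natDegree_lt h2
          rw [h0, mul_zero, w.v_zero]
          exact lt_top_iff_ne_top.mpr hfin
        push_neg at h1 h2
        have hne1 : p.1 ≠ i0 := by
          intro h
          apply hne
          have h' : p.2 = j0 := by omega
          exact Prod.ext h h'
        have hstrict : VB + VC < P p.1 + Q p.2 := by
          rcases lt_or_gt_of_ne hne1 with hlt | hgt
          · have hPlt : VB < P p.1 :=
              lt_of_le_of_ne (hVBle p.1 h1) (fun h => (hi0min p.1 hlt) h.symm)
            calc VB + VC < P p.1 + VC := WithTop.add_lt_add_right hVCne hPlt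
              _ ≤ P p.1 + Q p.2 := add_le_add_right (hVCle p.2 h2) _
          · have hj : p.2 < j0 := by omega
            have hQlt : VC < Q p.2 :=
              lt_of_le_of_ne (hVCle p.2 h2) (fun h => (hj0min p.2 hj) h.symm)
            calc VB + VC < VB + Q p.2 := WithTop.add_lt_add_left hVBne hQlt
              _ ≤ P p.1 + Q p.2 := add_le_add_left (hVBle p.1 h1) _
        rw [← hPi0, ← hQj0, hPQ i0 j0, hPQ p.1 p.2, hpm] at hstrict
        exact wt_lt_of_nsmul_lt (lt_of_add_lt_add_right hstrict)
    have hVV : VB + VC = n • w.v (A.coeff m) + ((m • δ : Γ) : WithTop Γ) := by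
      rw [hsum, ← hPi0, ← hQj0, hPQ]
    -- D2 lower bound
    have hcoeA0 : n • w.v (A.coeff 0) = ((n • α0 : Γ) : WithTop Γ) := by
      rw [← hα0, ← WithTop.coe_nsmul]
    have hlow : n • w.v (A.coeff 0) ≤ VB + VC := by
      rw [hVV, hcoeA0]
      have h2 := hD2 m hmn
      calc ((n • α0 : Γ) : WithTop Γ)
          = (n - m) • w.v (A.coeff 0) + m • w.v (A.coeff n) + ((m • δ : Γ) : WithTop Γ) := by
            rw [← hα0, ← hαn, ← WithTop.coe_nsmul, ← WithTop.coe_nsmul, ← WithTop.coe_add,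
              ← WithTop.coe_add, WithTop.coe_inj, hδdef, smul_sub]
            have hadd : (n - m) • α0 + m • α0 = n • α0 := by
              rw [← add_nsmul, Nat.sub_add_cancel hmn]
            rw [← hadd]
            abel
        _ ≤ n • w.v (A.coeff m) + ((m • δ : Γ) : WithTop Γ) := add_le_add_left h2 _
    -- equality at the bottom end
    have hP0Q0 : P 0 + Q 0 = n • w.v (A.coeff 0) := by
      have h0 : β0 + c0v = α0 := by
        have h' : (↑(β0 + c0v) : WithTop Γ) = ↑α0 := by
          rw [WithTop.coe_add, hβ0, hc0v, ← w.map_mul, hb0c0, hα0]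
        exact WithTop.coe_inj.mp h'
      rw [hP0, hQ0, hcoeA0, ← WithTop.coe_add, WithTop.coe_inj, ← smul_add, h0]
    have hupper : P 0 + Q 0 ≤ VB + VC := by rw [hP0Q0]; exact hlow
    obtain ⟨hVBP0, hVCQ0⟩ := wt_split (hVBle 0 (Nat.zero_le r)) (hVCle 0 (Nat.zero_le s))
      hupper (hP0 ▸ WithTop.coe_ne_top) (hQ0 ▸ WithTop.coe_ne_top)
    -- equality at the top end
    have hPr : P r = ((n • βr + r • δ : Γ) : WithTop Γ) := by
      simp only [hPdef]
      rw [← hβr, ← WithTop.coe_nsmul, ← WithTop.coe_add]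
    have hQs : Q s = ((n • csv + s • δ : Γ) : WithTop Γ) := by
      simp only [hQdef]
      rw [← hcsv, ← WithTop.coe_nsmul, ← WithTop.coe_add]
    have hPrQs : P r + Q s = n • w.v (A.coeff 0) := by
      have hsn : βr + csv = αn := by
        have h' : (↑(βr + csv) : WithTop Γ) = ↑αn := by
          rw [WithTop.coe_add, hβr, hcsv, ← w.map_mul, hbrcs, hαn]
        exact WithTop.coe_inj.mp h'
      rw [hPr, hQs, hcoeA0, ← WithTop.coe_add, WithTop.coe_inj]
      calc n • βr + r • δ + (n • csv + s • δ)
          = n • (βr + csv) + (r + s) • δ := by rw [smul_add, add_nsmul]; abel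
        _ = n • αn + n • δ := by rw [hsn, hrs]
        _ = n • α0 := by rw [hδdef, smul_sub]; abel
    have hupper' : P r + Q s ≤ VB + VC := by rw [hPrQs]; exact hlow
    obtain ⟨hVBPr, hVCQs⟩ := wt_split (hVBle r le_rfl) (hVCle s le_rfl)
      hupper' (hPr ▸ WithTop.coe_ne_top) (hQs ▸ WithTop.coe_ne_top)
    -- key equation n•γ = r•δ
    set γ := β0 - βr with hγdef
    have hkey : n • γ = r • δ := by
      have hkeyW : (↑(n • β0) : WithTop Γ) = ↑(n • βr + r • δ) := by
        rw [← hP0, ← hPr, ← hVBP0, ← hVBPr]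
      have h := WithTop.coe_inj.mp hkeyW
      rw [hγdef, smul_sub, h]
      abel
    -- arithmetic
    set d := Nat.gcd n r with hddef
    have hdpos : 0 < d := Nat.gcd_pos_of_pos_right n (Nat.pos_of_ne_zero hr)
    set n' := n / d with hn'def
    set r' := r / d with hr'def
    have hnd : n' * d = n := Nat.div_mul_cancel (Nat.gcd_dvd_left n r)
    have hrd : r' * d = r := Nat.div_mul_cancel (Nat.gcd_dvd_right n r)
    have hcop : Nat.Coprime n' r' := Nat.coprime_div_gcd_div_gcd hdpos
    have hkey' : n' • γ = r' • δ := by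
      have hinj : Function.Injective (fun x : Γ => d • x) :=
        (nsmul_right_strictMono (Nat.pos_iff_ne_zero.mp hdpos)).injective
      apply hinj
      show d • (n' • γ) = d • (r' • δ)
      rw [smul_smul, smul_smul, mul_comm d n', mul_comm d r', hnd, hrd]
      exact hkey
    have hbez' : (1 : ℤ) = (n' : ℤ) * Nat.gcdA n' r' + (r' : ℤ) * Nat.gcdB n' r' := by
      have hbez := Nat.gcd_eq_gcd_ab n' r'
      rw [Nat.Coprime] at hcop
      rw [hcop] at hbez
      exact_mod_cast hbez
    set u := Nat.gcdA n' r' with hudef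
    set vv := Nat.gcdB n' r' with hvvdef
    set g : Γ := u • δ + vv • γ with hgdef
    have hδg : δ = n' • g := by
      have hcalc : δ = (n' : ℤ) • g := by
        calc δ = (1 : ℤ) • δ := (one_smul ℤ δ).symm
          _ = ((n' : ℤ) * u + (r' : ℤ) * vv) • δ := by rw [← hbez']
          _ = ((n' : ℤ) * u) • δ + ((r' : ℤ) * vv) • δ := add_smul _ _ _
          _ = (n' : ℤ) • (u • δ) + vv • ((r' : ℤ) • δ) := by
              rw [mul_smul, mul_comm ((r' : ℤ)) vv, mul_smul]
          _ = (n' : ℤ) • (u • δ) + vv • ((n' : ℤ) • γ) := by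
              rw [natCast_zsmul δ r', ← hkey', ← natCast_zsmul]
          _ = (n' : ℤ) • (u • δ) + (n' : ℤ) • (vv • γ) := by rw [smul_comm vv ((n' : ℤ)) γ]
          _ = (n' : ℤ) • g := by rw [← smul_add, hgdef]
      rw [hcalc, natCast_zsmul]
    have hrltn : r < n := by omega
    have hdr : d ≤ r := Nat.le_of_dvd (Nat.pos_of_ne_zero hr) (Nat.gcd_dvd_right n r)
    have hn'1 : 1 < n' := by
      have h0 : n' ≠ 0 := fun h0 => hn0 (by rw [← hnd, h0, zero_mul])
      have h1 : n' ≠ 1 := by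
        intro h1
        have : n ≤ r := by rw [← hnd, h1, one_mul]; exact hdr
        omega
      exact Nat.one_lt_iff_ne_zero_and_ne_one.mpr ⟨h0, h1⟩
    apply hD1 n' hn'1 ⟨d, hnd.symm⟩ g
    rw [← hα0, ← hαn, ← WithTop.coe_add, WithTop.coe_inj, ← hδg, hδdef]
    abel
end

section
/- Let K be a field with a nontrivial Krull valuation v into a linearly ordered abelian group Γ, let A(x) = Σ_{i=0}^n a_i x^i ∈ K[x] have degree n (with a_0 ≠ 0 and n a_0 ≠ 0), and let B(x) = Σ_{i=0}^n a_{n−i} x^i be its reversal. Then U(B(x)) is the degree-n reversal of L(A(x)), i.e. U(B(x)) = x^n · L(A)(1/x); moreover, L(A(x)) is an Eisenstein–Dumas polynomial at v if and only if U(B(x)) is an Eisenstein–Dumas polynomial at v. -/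
open Polynomial

variable {K : Type*} [Field K] {Γ : Type*} [AddCommGroup Γ] [LinearOrder Γ] [IsOrderedAddMonoid Γ]

/-- For `A = Σ aᵢ xⁱ` of degree `n`, `U(A(x)) := A(x − a_{n−1}/(n·aₙ))`. -/
noncomputable def Upoly (n : ℕ) (A : K[X]) : K[X] :=
  A.comp (X - C (A.coeff (n - 1) / ((n : K) * A.coeff n)))

/-- For `A = Σ aᵢ xⁱ` of degree `n`,
`L(A(x)) := Σ_{i=0}^n aᵢ xⁱ (1 − (a₁/(n·a₀))x)^{n−i}`. -/
noncomputable def Lpoly (n : ℕ) (A : K[X]) : K[X] :=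
  ∑ i ∈ Finset.range (n + 1),
    C (A.coeff i) * X ^ i * (1 - C (A.coeff 1 / ((n : K) * A.coeff 0)) * X) ^ (n - i)

/- ### Auxiliary lemmas -/

lemma reflect_sum' {R : Type*} [CommRing R] {ι : Type*} (s : Finset ι) (f : ι → R[X]) (N : ℕ) :
    Polynomial.reflect N (∑ i ∈ s, f i) = ∑ i ∈ s, Polynomial.reflect N (f i) := by
  ext j
  simp [Polynomial.coeff_reflect, Polynomial.finset_sum_coeff]

lemma natDegree_one_sub_C_mul_X {R : Type*} [CommRing R] (c : R) :
    (1 - Polynomial.C c * Polynomial.X : R[X]).natDegree ≤ 1 :=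
  (Polynomial.natDegree_sub_le _ _).trans
    (max_le (by simp) ((Polynomial.natDegree_C_mul_le _ _).trans Polynomial.natDegree_X_le))

lemma reflect_one_lin {R : Type*} [CommRing R] (c : R) :
    Polynomial.reflect 1 (1 - Polynomial.C c * Polynomial.X) =
      Polynomial.X - Polynomial.C c := by
  rw [Polynomial.reflect_sub, Polynomial.reflect_one, Polynomial.reflect_C_mul,
    Polynomial.reflect_one_X, pow_one, mul_one]

lemma reflect_pow_lin {R : Type*} [CommRing R] (c : R) :
    ∀ m : ℕ, Polynomial.reflect m ((1 - Polynomial.C c * Polynomial.X) ^ m) =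
      (Polynomial.X - Polynomial.C c) ^ m
  | 0 => by simp
  | (m + 1) => by
    rw [pow_succ', show m + 1 = 1 + m from by omega,
      Polynomial.reflect_mul _ _ (natDegree_one_sub_C_mul_X c)
        ((Polynomial.natDegree_pow_le_of_le m (natDegree_one_sub_C_mul_X c)).trans
          (by omega)),
      reflect_one_lin, reflect_pow_lin c m]
    ring

/-- The key polynomial identity, for an arbitrary shift `c`. -/
lemma reflect_comp_eq_reflect_sum (n : ℕ) (A : K[X]) (hdeg : A.natDegree ≤ n) (c : K) :
    (A.reflect n).comp (X - C c) =
      (∑ i ∈ Finset.range (n + 1),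
        C (A.coeff i) * X ^ i * (1 - C c * X) ^ (n - i)).reflect n := by
  have hA : A = ∑ i ∈ Finset.range (n + 1), C (A.coeff i) * X ^ i := by
    conv_lhs => rw [A.as_sum_range' (n + 1) (Nat.lt_succ_of_le hdeg)]
    simp [Polynomial.C_mul_X_pow_eq_monomial]
  rw [reflect_sum']
  conv_lhs => rw [hA]
  rw [reflect_sum', Polynomial.sum_comp]
  refine Finset.sum_congr rfl fun i hi => ?_
  have hi' : i ≤ n := Nat.lt_succ_iff.mp (Finset.mem_range.mp hi)
  rw [Polynomial.reflect_C_mul_X_pow, Polynomial.revAt_le hi', Polynomial.mul_comp,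
    Polynomial.C_comp, Polynomial.X_pow_comp]
  rw [show n = i + (n - i) from (Nat.add_sub_cancel' hi').symm,
    Polynomial.reflect_mul _ _ (Polynomial.natDegree_C_mul_X_pow_le _ _)
      ((Polynomial.natDegree_pow_le_of_le _ (natDegree_one_sub_C_mul_X c)).trans (by omega)),
    Polynomial.reflect_C_mul_X_pow, Polynomial.revAt_le le_rfl, Nat.sub_self, pow_zero,
    mul_one]
  simp only [Nat.add_sub_cancel_left]
  rw [reflect_pow_lin]

/-- Reflection preserves the Eisenstein–Dumas property. -/
lemma IsEisensteinDumas.reflect_self (w : KrullValuation K Γ) {n : ℕ} {L : K[X]}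
    (h : IsEisensteinDumas w n L) : IsEisensteinDumas w n (L.reflect n) := by
  obtain ⟨hdeg, h0, h1, h2⟩ := h
  have hc0 : L.coeff 0 ≠ 0 := left_ne_zero_of_mul h0
  have hcn : L.coeff n ≠ 0 := right_ne_zero_of_mul h0
  have e0 : (L.reflect n).coeff 0 = L.coeff n := by
    rw [Polynomial.coeff_reflect, Polynomial.revAt_le (Nat.zero_le n), Nat.sub_zero]
  have en : (L.reflect n).coeff n = L.coeff 0 := by
    rw [Polynomial.coeff_reflect, Polynomial.revAt_le le_rfl, Nat.sub_self]
  refine ⟨?_, ?_, ?_, ?_⟩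
  · refine le_antisymm ?_ (Polynomial.le_natDegree_of_ne_zero (en ▸ hc0))
    rw [Polynomial.natDegree_le_iff_coeff_eq_zero]
    intro N hN
    rw [Polynomial.coeff_reflect, Polynomial.revAt_eq_self_of_lt hN]
    exact Polynomial.coeff_eq_zero_of_natDegree_lt (by omega)
  · rw [e0, en, mul_comm]; exact h0
  · intro k hk hkn g
    rw [e0, en]
    intro hEq
    have hnt0 : w.v (L.coeff 0) ≠ ⊤ := fun ht => hc0 ((w.eq_top_iff _).mp ht)
    have hntn : w.v (L.coeff n) ≠ ⊤ := fun ht => hcn ((w.eq_top_iff _).mp ht)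
    obtain ⟨x, hx⟩ := WithTop.ne_top_iff_exists.mp hnt0
    obtain ⟨y, hy⟩ := WithTop.ne_top_iff_exists.mp hntn
    apply h1 k hk hkn (-g)
    rw [← hx, ← hy] at hEq ⊢
    have hyx : y = x + k • g := by exact_mod_cast hEq
    have hxy : x = y + k • (-g) := by rw [hyx, smul_neg, add_neg_cancel_right]
    exact_mod_cast congrArg (WithTop.some) hxy
  · intro i hi
    have e : (L.reflect n).coeff i = L.coeff (n - i) := by
      rw [Polynomial.coeff_reflect, Polynomial.revAt_le hi]
    rw [e0, en, e, add_comm]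
    have := h2 (n - i) (Nat.sub_le _ _)
    rwa [Nat.sub_sub_self hi] at this

/-- For `A` of degree `n` and its reversal `B(x) = Σ a_{n−i} xⁱ = reflect n A`, the polynomial
`U(B(x))` is the degree-`n` reversal of `L(A(x))`; moreover `L(A(x))` is an Eisenstein–Dumas
polynomial at `v` iff `U(B(x))` is. -/
theorem Upoly_reflect_eq_reflect_Lpoly (w : KrullValuation K Γ) (hw : w.IsNontrivial)
    (n : ℕ) (A : K[X]) (hdeg : A.natDegree = n) (ha0 : A.coeff 0 ≠ 0)
    (hna0 : (n : K) * A.coeff 0 ≠ 0) :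
    Upoly n (A.reflect n) = (Lpoly n A).reflect n ∧
    (IsEisensteinDumas w n (Lpoly n A) ↔ IsEisensteinDumas w n (Upoly n (A.reflect n))) := by
  have hn : n ≠ 0 := by
    rintro rfl
    simp at hna0
  have h1 : (A.reflect n).coeff (n - 1) = A.coeff 1 := by
    rw [Polynomial.coeff_reflect, Polynomial.revAt_le (Nat.sub_le n 1),
      Nat.sub_sub_self (Nat.one_le_iff_ne_zero.mpr hn)]
  have h2 : (A.reflect n).coeff n = A.coeff 0 := by
    rw [Polynomial.coeff_reflect, Polynomial.revAt_le le_rfl, Nat.sub_self]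
  have hEq : Upoly n (A.reflect n) = (Lpoly n A).reflect n := by
    rw [Upoly, h1, h2, Lpoly]
    exact reflect_comp_eq_reflect_sum n A hdeg.le _
  have hdouble : ((Lpoly n A).reflect n).reflect n = Lpoly n A := by
    ext j
    simp [Polynomial.coeff_reflect, Polynomial.revAt_invol]
  refine ⟨hEq, ?_, ?_⟩
  · intro h
    rw [hEq]
    exact h.reflect_self w
  · intro h
    rw [hEq] at h
    have := h.reflect_self w
    rwa [hdouble] at this
end

section
/- Let K be a field with a nontrivial Krull valuation v into a linearly ordered abelian group Γ, A(x) ∈ K[x], and t ∈ K, t ≠ 0. Then A(tx) is an Eisenstein–Dumas polynomial at v if and only if A(x) is an Eisenstein–Dumas polynomial at v. -/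
open Polynomial

variable {K : Type*} [Field K] {Γ : Type*} [AddCommGroup Γ] [LinearOrder Γ] [IsOrderedAddMonoid Γ]

lemma aux_comp_coeff (p : K[X]) (t : K) (i : ℕ) :
    (p.comp (C t * X)).coeff i = p.coeff i * t ^ i := by
  rw [comp, eval₂_eq_sum, Polynomial.sum, finset_sum_coeff]
  simp only [mul_pow, ← C_pow, ← mul_assoc, ← C_mul, coeff_C_mul, coeff_X_pow]
  rw [Finset.sum_eq_single i]
  · simp
  · intro b _ hb; simp [Ne.symm hb]
  · intro h; simp [Polynomial.notMem_support_iff.mp h]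

lemma aux_v_one (w : KrullValuation K Γ) : w.v 1 = 0 := by
  have h := w.map_mul 1 1
  rw [mul_one] at h
  have h1 : w.v 1 ≠ ⊤ := by simp [w.eq_top_iff]
  obtain ⟨γ, hγ⟩ := WithTop.ne_top_iff_exists.mp h1
  rw [← hγ, ← WithTop.coe_add, WithTop.coe_eq_coe] at h
  have : γ = 0 := by have h2 := h.symm; rwa [add_eq_left] at h2
  rw [← hγ, this, WithTop.coe_zero]

lemma aux_v_pow (w : KrullValuation K Γ) (t : K) (i : ℕ) :
    w.v (t ^ i) = i • w.v t := by
  induction i with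
  | zero => simp [aux_v_one]
  | succ m ih => rw [pow_succ, w.map_mul, ih, succ_nsmul]

lemma aux_forward (w : KrullValuation K Γ) (n : ℕ) (A : K[X]) (t : K) (ht : t ≠ 0)
    (h : IsEisensteinDumas w n A) : IsEisensteinDumas w n (A.comp (C t * X)) := by
  obtain ⟨hdeg, h0, h1, h2⟩ := h
  have hvt : w.v t ≠ ⊤ := fun h => ht ((w.eq_top_iff t).mp h)
  obtain ⟨γ, hγ⟩ := WithTop.ne_top_iff_exists.mp hvt
  have hc : ∀ i : ℕ, w.v ((A.comp (C t * X)).coeff i) = w.v (A.coeff i) + ((i • γ : Γ) : WithTop Γ) := by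
    intro i
    rw [aux_comp_coeff, w.map_mul, aux_v_pow, ← hγ, WithTop.coe_nsmul]
  have hc0 : (A.comp (C t * X)).coeff 0 = A.coeff 0 := by
    rw [aux_comp_coeff]; simp
  refine ⟨?_, ?_, ?_, ?_⟩
  · rw [natDegree_comp, natDegree_C_mul_X t ht, mul_one, hdeg]
  · rw [hc0, aux_comp_coeff]
    exact mul_ne_zero (fun h => h0 (by rw [h, zero_mul]))
      (mul_ne_zero (fun h => h0 (by rw [h, mul_zero])) (pow_ne_zero _ ht))
  · intro k hk hkn g
    obtain ⟨m, hm⟩ := hkn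
    rw [hc0, hc]
    have key : ((n • γ : Γ) : WithTop Γ) + ((k • g : Γ) : WithTop Γ)
        = ((k • (g + m • γ) : Γ) : WithTop Γ) := by
      rw [← WithTop.coe_add, WithTop.coe_eq_coe, smul_add, smul_smul, ← hm]
      rw [add_comm]
    rw [add_assoc, key]
    exact h1 k hk ⟨m, hm⟩ (g + m • γ)
  · intro i hi
    rw [hc0, hc, hc, smul_add, smul_add, ← WithTop.coe_nsmul, ← WithTop.coe_nsmul,
      smul_smul, smul_smul, mul_comm i n, ← add_assoc]
    exact add_le_add_left (h2 i hi) _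

/-- For `t ≠ 0`, `A(tx)` is an Eisenstein–Dumas polynomial at `v` iff `A(x)` is. -/
theorem scale_eisensteinDumas_iff (w : KrullValuation K Γ) (hw : w.IsNontrivial)
    (n : ℕ) (A : K[X]) (t : K) (ht : t ≠ 0) :
    IsEisensteinDumas w n (A.comp (C t * X)) ↔ IsEisensteinDumas w n A := by
  constructor
  · intro h
    have h2 := aux_forward w n _ t⁻¹ (inv_ne_zero ht) h
    have : (A.comp (C t * X)).comp (C t⁻¹ * X) = A := by
      rw [comp_assoc]
      simp [mul_comp, C_comp, X_comp, ← mul_assoc, ← C_mul, mul_inv_cancel₀ ht]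
    rwa [this] at h2
  · exact aux_forward w n A t ht
end

section
/- Let K be a field with a nontrivial Krull valuation v into a linearly ordered abelian group Γ, and let A(x) = Σ_{i=0}^n a_i x^i ∈ K[x] have degree n. Then A satisfies conditions (D0), (D1), (D2) if and only if A satisfies (D0), (D1), and the strict condition (D2'): n·v(a_i) > (n−i)·v(a_0) + i·v(a_n) for all 1 ≤ i ≤ n−1. In particular, an Eisenstein–Dumas polynomial automatically satisfies the strict inequalities in its interior coefficients. -/
open Polynomial

variable {K : Type*} [Field K] {Γ : Type*} [AddCommGroup Γ] [LinearOrder Γ] [IsOrderedAddMonoid Γ]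

lemma nsmul_coe_withTop (a : Γ) (m : ℕ) :
    m • ((a : WithTop Γ)) = ((m • a : Γ) : WithTop Γ) := by
  induction m with
  | zero => simp
  | succ k ih => rw [succ_nsmul, succ_nsmul, ih, ← WithTop.coe_add]

lemma nsmul_top_withTop (m : ℕ) (hm : m ≠ 0) : m • (⊤ : WithTop Γ) = ⊤ := by
  obtain ⟨k, rfl⟩ := Nat.exists_eq_succ_of_ne_zero hm
  rw [succ_nsmul]; simp

lemma key_equality (α β γ : Γ) (i j n : ℕ) (hij : i + j = n) (hi : 1 ≤ i) (hj : 1 ≤ j)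
    (e : j • α + i • β = n • γ) :
    ∃ (k : ℕ) (g : Γ), 1 < k ∧ k ∣ n ∧ α = β + k • g := by
  have hn : 0 < n := by omega
  have e' : (j : ℤ) • (α - β) = (n : ℤ) • (γ - β) := by
    have e2 : (j : ℤ) • α + (i : ℤ) • β = (n : ℤ) • γ := by
      rw [natCast_zsmul, natCast_zsmul, natCast_zsmul]; exact e
    have hij' : (i : ℤ) + (j : ℤ) = (n : ℤ) := by exact_mod_cast hij
    rw [smul_sub, smul_sub, ← e2, ← hij', add_smul]; abel
  set d := Nat.gcd n j with hd
  have hdpos : 0 < d := Nat.gcd_pos_of_pos_left j hn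
  have hdn : d ∣ n := Nat.gcd_dvd_left n j
  have hdj : d ∣ j := Nat.gcd_dvd_right n j
  set n' := n / d with hn'
  set m' := j / d with hm'
  have hnd : n = d * n' := (Nat.mul_div_cancel' hdn).symm
  have hjd : j = d * m' := by rw [hm', Nat.mul_div_cancel' hdj]
  have hcop : Nat.Coprime n' m' := Nat.coprime_div_gcd_div_gcd hdpos
  have hcancel : (n' : ℤ) • (γ - β) = (m' : ℤ) • (α - β) := by
    have : (d : ℤ) • ((m' : ℤ) • (α - β)) = (d : ℤ) • ((n' : ℤ) • (γ - β)) := by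
      rw [smul_smul, smul_smul, ← Int.natCast_mul, ← Int.natCast_mul, ← hjd, ← hnd]
      exact e'
    exact (zsmul_right_injective (by exact_mod_cast hdpos.ne') this).symm
  -- Bezout
  have hbez : ∃ u v : ℤ, u * n' + v * m' = 1 := by
    refine ⟨Nat.gcdA n' m', Nat.gcdB n' m', ?_⟩
    have := Nat.gcd_eq_gcd_ab n' m'
    rw [hcop] at this
    push_cast at this
    linarith
  obtain ⟨u, v, hbez⟩ := hbez
  refine ⟨n', u • (α - β) + v • (γ - β), ?_, ⟨d, by rw [hnd, Nat.mul_comm]⟩, ?_⟩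
  · -- 1 < n'
    by_contra h
    have hdlej : d ≤ j := Nat.le_of_dvd hj hdj
    interval_cases n' <;> omega
  · have : α - β = (n' : ℤ) • (u • (α - β) + v • (γ - β)) := by
      rw [smul_add, smul_comm (n':ℤ) u, smul_comm (n':ℤ) v, hcancel,
        smul_smul, smul_smul, ← add_smul, hbez, one_smul]
    rw [natCast_zsmul] at this
    rw [← this]; abel


/-- For `A` of degree `n`, conditions (D0), (D1), (D2) together are equivalent to (D0), (D1)
and the strict condition (D2'): `n·v(aᵢ) > (n−i)·v(a₀) + i·v(aₙ)` for `1 ≤ i ≤ n−1`. -/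
theorem eisensteinDumas_iff_strict (w : KrullValuation K Γ) (hw : w.IsNontrivial)
    (n : ℕ) (A : K[X]) (hdeg : A.natDegree = n) (hA : A ≠ 0) :
    (A.coeff 0 * A.coeff n ≠ 0 ∧
     (∀ k : ℕ, 1 < k → k ∣ n → ∀ g : Γ,
       w.v (A.coeff 0) ≠ w.v (A.coeff n) + ((k • g : Γ) : WithTop Γ)) ∧
     (∀ i ≤ n, (n - i) • w.v (A.coeff 0) + i • w.v (A.coeff n) ≤ n • w.v (A.coeff i)))
    ↔
    (A.coeff 0 * A.coeff n ≠ 0 ∧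
     (∀ k : ℕ, 1 < k → k ∣ n → ∀ g : Γ,
       w.v (A.coeff 0) ≠ w.v (A.coeff n) + ((k • g : Γ) : WithTop Γ)) ∧
     (∀ i, 1 ≤ i → i ≤ n - 1 →
       (n - i) • w.v (A.coeff 0) + i • w.v (A.coeff n) < n • w.v (A.coeff i))) := by
  constructor
  · rintro ⟨h0, h1, h2⟩
    refine ⟨h0, h1, fun i hi1 hi2 => ?_⟩
    have ha0 : A.coeff 0 ≠ 0 := left_ne_zero_of_mul h0
    have han : A.coeff n ≠ 0 := right_ne_zero_of_mul h0
    obtain ⟨α, hα⟩ := WithTop.ne_top_iff_exists.mp (fun h => ha0 ((w.eq_top_iff _).mp h))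
    obtain ⟨β, hβ⟩ := WithTop.ne_top_iff_exists.mp (fun h => han ((w.eq_top_iff _).mp h))
    by_cases hci : A.coeff i = 0
    · rw [show w.v (A.coeff i) = ⊤ from (w.eq_top_iff _).mpr hci,
        nsmul_top_withTop n (by omega), ← hα, ← hβ, nsmul_coe_withTop, nsmul_coe_withTop,
        ← WithTop.coe_add]
      exact WithTop.coe_lt_top _
    · obtain ⟨γ, hγ⟩ := WithTop.ne_top_iff_exists.mp (fun h => hci ((w.eq_top_iff _).mp h))
      have hle := h2 i (by omega)
      rw [← hα, ← hβ, ← hγ, nsmul_coe_withTop, nsmul_coe_withTop, nsmul_coe_withTop,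
        ← WithTop.coe_add] at hle ⊢
      rw [WithTop.coe_le_coe] at hle
      rcases hle.lt_or_eq with h | h
      · exact WithTop.coe_lt_coe.mpr h
      · exfalso
        obtain ⟨k, g, hk1, hkn, hg⟩ := key_equality α β γ i (n - i) n (by omega) hi1 (by omega) h
        exact h1 k hk1 hkn g (by rw [← hα, ← hβ, hg, WithTop.coe_add])
  · rintro ⟨h0, h1, h2⟩
    refine ⟨h0, h1, fun i hin => ?_⟩
    rcases eq_or_ne i 0 with rfl | hi0
    · simp
    · rcases eq_or_ne i n with rfl | hiN
      · simp
      · exact (h2 i (by omega) (by omega)).le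
end
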